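/- (Modulational expansion of the coefficient II.) Let g > 0, k₀ > 0, and χⱼ = (λⱼ, μⱼ) ∈ ℝ², j = 1,…,4, be fixed with χ₁ + χ₂ = χ₃ + χ₄ and χ₁ ≠ χ₃. Substitute k₁ = (k₀,0)+εχ₁, k₂ = (k₀,0)+εχ₂, k₃ = −((k₀,0)+εχ₃), k₄ = −((k₀,0)+εχ₄) into the coefficient II(k₁,k₂,k₃,k₄). Then, as ε → 0⁺, II = ε·(k₀²/(4π²))·(λ₁−λ₃)²/‖χ₁−χ₃‖ + O(ε^{3/2}). -/

import Mathlib

open Asymptotics Filter Topology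

/-- Euclidean norm on ℝ². -/
noncomputable def norm2 (k : ℝ × ℝ) : ℝ := Real.sqrt (k.1 ^ 2 + k.2 ^ 2)

/-- Euclidean inner product on ℝ². -/
def dot (a b : ℝ × ℝ) : ℝ := a.1 * b.1 + a.2 * b.2

/-- Deep-water dispersion relation ω(k) = √(g‖k‖). -/
noncomputable def omg (g : ℝ) (k : ℝ × ℝ) : ℝ := Real.sqrt (g * norm2 k)

/-- ℓ_a^b = (‖a‖‖b‖ + a·b)/√(‖a‖‖b‖). -/
noncomputable def ell (a b : ℝ × ℝ) : ℝ :=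
  (norm2 a * norm2 b + dot a b) / Real.sqrt (norm2 a * norm2 b)

/-- The coefficient II of Proposition 4.3. -/
noncomputable def coefII (g : ℝ) (k₁ k₂ k₃ k₄ : ℝ × ℝ) : ℝ :=
  Real.sqrt g / (32 * Real.pi ^ 2) *
    (norm2 k₁ * norm2 k₂ * norm2 k₃ * norm2 k₄ * norm2 (k₁ + k₃) * norm2 (k₂ + k₄)) ^
      ((1 : ℝ) / 4) *
    (ell k₁ k₃ + ell (k₁ + k₃) (-k₃) - ell (k₁ + k₃) (-k₁)) *
    (ell k₄ k₂ + ell (k₂ + k₄) (-k₂) - ell (k₂ + k₄) (-k₄)) *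
    (1 / (omg g k₁ + omg g (k₁ + k₃) - omg g k₃)
      + 1 / (omg g k₄ + omg g (k₂ + k₄) - omg g k₂))

/-! ### Auxiliary definitions: substitute `ε = s²` and factor out powers of `s`. -/

/-- `(k₀ + s²λ)² + (s²μ)²`, the squared norm of `(k₀,0) + s² • χ`. -/
def auxP (k₀ : ℝ) (χ : ℝ × ℝ) (s : ℝ) : ℝ := (k₀ + s ^ 2 * χ.1) ^ 2 + (s ^ 2 * χ.2) ^ 2

/-- Norm of `(k₀,0) + s² • χ`. -/
noncomputable def auxN (k₀ : ℝ) (χ : ℝ × ℝ) (s : ℝ) : ℝ := Real.sqrt (auxP k₀ χ s)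

/-- Dot product of `(k₀,0) + s² • χ` and `(k₀,0) + s² • χ'`. -/
def auxD (k₀ : ℝ) (χ χ' : ℝ × ℝ) (s : ℝ) : ℝ :=
  (k₀ + s ^ 2 * χ.1) * (k₀ + s ^ 2 * χ'.1) + (s ^ 2 * χ.2) * (s ^ 2 * χ'.2)

/-- Rescaled cross product of `(k₀,0) + s² • χ` and `(k₀,0) + s² • χ'`. -/
def auxC (k₀ : ℝ) (χ χ' : ℝ × ℝ) (s : ℝ) : ℝ :=
  k₀ * (χ'.2 - χ.2) + s ^ 2 * (χ.1 * χ'.2 - χ'.1 * χ.2)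

/-- Rescaled dot product of `s² • δ` with `(k₀,0) + s² • χ`. -/
def auxL (k₀ : ℝ) (δ χ : ℝ × ℝ) (s : ℝ) : ℝ := k₀ * δ.1 + s ^ 2 * (δ.1 * χ.1 + δ.2 * χ.2)

/-- Rescaled difference of frequencies. -/
noncomputable def auxQ (g k₀ : ℝ) (χ χ' : ℝ × ℝ) (s : ℝ) : ℝ :=
  g * (2 * k₀ * (χ.1 - χ'.1) + s ^ 2 * (χ.1 ^ 2 + χ.2 ^ 2 - χ'.1 ^ 2 - χ'.2 ^ 2)) /
    ((auxN k₀ χ s + auxN k₀ χ' s) *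
      (Real.sqrt (g * auxN k₀ χ s) + Real.sqrt (g * auxN k₀ χ' s)))

/-- Rescaled bracket of `ℓ`-terms. -/
noncomputable def auxB (k₀ : ℝ) (δ χp χm : ℝ × ℝ) (s : ℝ) : ℝ :=
  (norm2 δ * auxN k₀ χp s + auxL k₀ δ χp s) / Real.sqrt (norm2 δ * auxN k₀ χp s)
    - (norm2 δ * auxN k₀ χm s - auxL k₀ δ χm s) / Real.sqrt (norm2 δ * auxN k₀ χm s)
    + s ^ 3 * (auxC k₀ χm χp s) ^ 2 /
        ((auxN k₀ χm s * auxN k₀ χp s + auxD k₀ χm χp s) *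
          Real.sqrt (auxN k₀ χm s * auxN k₀ χp s))

/-- The rescaled coefficient: `coefII = s² * auxG s` with `ε = s²`. -/
noncomputable def auxG (g k₀ : ℝ) (χ₁ χ₂ χ₃ χ₄ : ℝ × ℝ) (s : ℝ) : ℝ :=
  Real.sqrt g / (32 * Real.pi ^ 2) *
    (auxN k₀ χ₁ s * auxN k₀ χ₂ s * auxN k₀ χ₃ s * auxN k₀ χ₄ s * norm2 (χ₁ - χ₃) ^ 2) ^
      ((1 : ℝ) / 4) *
    auxB k₀ (χ₁ - χ₃) χ₃ χ₁ s * auxB k₀ (χ₁ - χ₃) χ₂ χ₄ s *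
    (1 / (Real.sqrt (g * norm2 (χ₁ - χ₃)) + s * auxQ g k₀ χ₁ χ₃ s)
      + 1 / (Real.sqrt (g * norm2 (χ₁ - χ₃)) + s * auxQ g k₀ χ₄ χ₂ s))

lemma norm2_pos {x : ℝ × ℝ} (hx : x ≠ 0) : 0 < norm2 x := by
  apply Real.sqrt_pos.mpr
  by_contra h
  push_neg at h
  have h1 : x.1 = 0 ∧ x.2 = 0 := by constructor <;> nlinarith [sq_nonneg x.1, sq_nonneg x.2]
  exact hx (Prod.ext_iff.mpr ⟨h1.1, h1.2⟩)

lemma norm2_neg (x : ℝ × ℝ) : norm2 (-x) = norm2 x := by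
  simp [norm2, neg_sq]

set_option maxHeartbeats 2000000 in

lemma auxN_zero (k₀ : ℝ) (hk₀ : 0 ≤ k₀) (χ : ℝ × ℝ) : auxN k₀ χ 0 = k₀ := by
  simp [auxN, auxP, Real.sqrt_sq hk₀]

lemma auxG_zero (g k₀ : ℝ) (hg : 0 < g) (hk₀ : 0 < k₀)
    (χ₁ χ₂ χ₃ χ₄ : ℝ × ℝ) (hne : χ₁ ≠ χ₃) :
    auxG g k₀ χ₁ χ₂ χ₃ χ₄ 0
      = k₀ ^ 2 / (4 * Real.pi ^ 2) * (χ₁.1 - χ₃.1) ^ 2 / norm2 (χ₁ - χ₃) := by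
  have hnδ : 0 < norm2 (χ₁ - χ₃) := norm2_pos (sub_ne_zero.mpr hne)
  set nδ := norm2 (χ₁ - χ₃) with hnd
  have h4 : (k₀ * k₀ * k₀ * k₀ * nδ ^ 2 : ℝ) ^ ((1 : ℝ) / 4) = k₀ * Real.sqrt nδ := by
    have h1 : k₀ * k₀ * k₀ * k₀ * nδ ^ 2 = (k₀ * Real.sqrt nδ) ^ (4 : ℕ) := by
      rw [show (k₀ * Real.sqrt nδ) ^ (4 : ℕ) = k₀ ^ 4 * (Real.sqrt nδ ^ 2) ^ 2 by ring,
        Real.sq_sqrt hnδ.le]; ring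
    rw [h1, ← Real.rpow_natCast (k₀ * Real.sqrt nδ) 4, ← Real.rpow_mul (by positivity)]
    norm_num
  have hB : ∀ χp χm : ℝ × ℝ, auxB k₀ (χ₁ - χ₃) χp χm 0
      = 2 * (k₀ * (χ₁.1 - χ₃.1)) / Real.sqrt (nδ * k₀) := by
    intro χp χm
    simp only [auxB, auxL, auxN_zero k₀ hk₀.le, ← hnd, Prod.fst_sub, Prod.snd_sub]
    rw [div_sub_div_same]
    ring
  simp only [auxG, auxN_zero k₀ hk₀.le, ← hnd, hB, h4, zero_mul, mul_zero, add_zero]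
  have hw : Real.sqrt (g * nδ) = Real.sqrt g * Real.sqrt nδ := Real.sqrt_mul hg.le _
  have hsk : Real.sqrt (nδ * k₀) = Real.sqrt nδ * Real.sqrt k₀ := Real.sqrt_mul hnδ.le _
  have h1 : Real.sqrt nδ ^ 2 = nδ := Real.sq_sqrt hnδ.le
  have h2 : Real.sqrt k₀ ^ 2 = k₀ := Real.sq_sqrt hk₀.le
  have h3 : Real.sqrt g ≠ 0 := by positivity
  have h5 : Real.sqrt nδ ≠ 0 := by positivity
  have h6 : Real.sqrt k₀ ≠ 0 := by positivity
  have hg2 : Real.sqrt g ^ 2 = g := Real.sq_sqrt hg.le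
  rw [hw, hsk]
  set a := Real.sqrt nδ with ha
  set b := Real.sqrt k₀ with hb
  set c := Real.sqrt g with hc
  rw [← h1, ← h2]
  field_simp
  ring

lemma auxG_differentiable (g k₀ : ℝ) (hg : 0 < g) (hk₀ : 0 < k₀)
    (χ₁ χ₂ χ₃ χ₄ : ℝ × ℝ) (hne : χ₁ ≠ χ₃) :
    DifferentiableAt ℝ (auxG g k₀ χ₁ χ₂ χ₃ χ₄) 0 := by
  have hnδ : 0 < norm2 (χ₁ - χ₃) := norm2_pos (sub_ne_zero.mpr hne)
  have hN0 : ∀ χ : ℝ × ℝ, auxN k₀ χ 0 = k₀ := auxN_zero k₀ hk₀.le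
  have hdN : ∀ χ : ℝ × ℝ, DifferentiableAt ℝ (auxN k₀ χ) 0 := by
    intro χ
    apply DifferentiableAt.sqrt
    · unfold auxP; fun_prop
    · simpa [auxP] using (by positivity : k₀ ^ 2 ≠ 0)
  have hdW : ∀ χ : ℝ × ℝ, DifferentiableAt ℝ (fun s => Real.sqrt (g * auxN k₀ χ s)) 0 := by
    intro χ
    apply DifferentiableAt.sqrt ((differentiableAt_const g).mul (hdN χ))
    simp only [Pi.mul_apply, hN0]
    positivity
  have hdQ : ∀ χ χ' : ℝ × ℝ, DifferentiableAt ℝ (auxQ g k₀ χ χ') 0 := by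
    intro χ χ'
    apply DifferentiableAt.div
    · fun_prop
    · exact ((hdN χ).add (hdN χ')).mul ((hdW χ).add (hdW χ'))
    · simp only [hN0]
      have : (0:ℝ) < Real.sqrt (g * k₀) := Real.sqrt_pos.mpr (by positivity)
      positivity
  have hdB : ∀ χp χm : ℝ × ℝ, DifferentiableAt ℝ (auxB k₀ (χ₁ - χ₃) χp χm) 0 := by
    intro χp χm
    have hterm : ∀ χ : ℝ × ℝ, DifferentiableAt ℝ
        (fun s => (norm2 (χ₁ - χ₃) * auxN k₀ χ s + auxL k₀ (χ₁ - χ₃) χ s) /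
          Real.sqrt (norm2 (χ₁ - χ₃) * auxN k₀ χ s)) 0 := by
      intro χ
      apply DifferentiableAt.div
      · exact ((differentiableAt_const _).mul (hdN χ)).add (by unfold auxL; fun_prop)
      · apply DifferentiableAt.sqrt ((differentiableAt_const _).mul (hdN χ))
        simp only [Pi.mul_apply, hN0]; positivity
      · simp only [hN0]
        have : (0:ℝ) < Real.sqrt (norm2 (χ₁ - χ₃) * k₀) := Real.sqrt_pos.mpr (by positivity)
        positivity
    have hterm2 : ∀ χ : ℝ × ℝ, DifferentiableAt ℝ
        (fun s => (norm2 (χ₁ - χ₃) * auxN k₀ χ s - auxL k₀ (χ₁ - χ₃) χ s) /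
          Real.sqrt (norm2 (χ₁ - χ₃) * auxN k₀ χ s)) 0 := by
      intro χ
      apply DifferentiableAt.div
      · exact ((differentiableAt_const _).mul (hdN χ)).sub (by unfold auxL; fun_prop)
      · apply DifferentiableAt.sqrt ((differentiableAt_const _).mul (hdN χ))
        simp only [Pi.mul_apply, hN0]; positivity
      · simp only [hN0]
        have : (0:ℝ) < Real.sqrt (norm2 (χ₁ - χ₃) * k₀) := Real.sqrt_pos.mpr (by positivity)
        positivity
    have hterm3 : DifferentiableAt ℝ (fun s => s ^ 3 * (auxC k₀ χm χp s) ^ 2 /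
        ((auxN k₀ χm s * auxN k₀ χp s + auxD k₀ χm χp s) *
          Real.sqrt (auxN k₀ χm s * auxN k₀ χp s))) 0 := by
      apply DifferentiableAt.div
      · unfold auxC; fun_prop
      · apply ((((hdN χm).mul (hdN χp)).add (by unfold auxD; fun_prop)).mul _)
        apply DifferentiableAt.sqrt ((hdN χm).mul (hdN χp))
        simp only [Pi.mul_apply, hN0]; positivity
      · simp only [hN0, auxD]
        have h1 : (0:ℝ) < Real.sqrt (k₀ * k₀) := Real.sqrt_pos.mpr (by positivity)
        have h2 : (0:ℝ) < k₀ * k₀ + ((k₀ + 0 ^ 2 * χm.1) * (k₀ + 0 ^ 2 * χp.1)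
            + 0 ^ 2 * χm.2 * (0 ^ 2 * χp.2)) := by norm_num; positivity
        positivity
    exact ((hterm χp).sub (hterm2 χm)).add hterm3
  have hdinv : ∀ χ χ' : ℝ × ℝ, DifferentiableAt ℝ
      (fun s => 1 / (Real.sqrt (g * norm2 (χ₁ - χ₃)) + s * auxQ g k₀ χ χ' s)) 0 := by
    intro χ χ'
    apply DifferentiableAt.div (differentiableAt_const 1)
    · exact (differentiableAt_const _).add (differentiableAt_id.mul (hdQ χ χ'))
    · simp only [zero_mul, add_zero]
      have : (0:ℝ) < Real.sqrt (g * norm2 (χ₁ - χ₃)) := Real.sqrt_pos.mpr (by positivity)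
      positivity
  have hdA : DifferentiableAt ℝ (fun s =>
      (auxN k₀ χ₁ s * auxN k₀ χ₂ s * auxN k₀ χ₃ s * auxN k₀ χ₄ s * norm2 (χ₁ - χ₃) ^ 2) ^
        ((1 : ℝ) / 4)) 0 := by
    apply DifferentiableAt.rpow_const
      (((((hdN χ₁).mul (hdN χ₂)).mul (hdN χ₃)).mul (hdN χ₄)).mul (differentiableAt_const _))
    left
    simp only [Pi.mul_apply, hN0]
    positivity
  exact ((((differentiableAt_const _).mul hdA).mul (hdB χ₃ χ₁)).mul (hdB χ₂ χ₄)).mul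
    ((hdinv χ₁ χ₃).add (hdinv χ₄ χ₂))

set_option maxHeartbeats 2000000 in
lemma coefII_eq_auxG (g k₀ : ℝ) (hg : 0 ≤ g) (χ₁ χ₂ χ₃ χ₄ : ℝ × ℝ)
    (hχ : χ₁ + χ₂ = χ₃ + χ₄) (s : ℝ) (hs : 0 < s)
    (h13 : auxN k₀ χ₁ s * auxN k₀ χ₃ s + auxD k₀ χ₁ χ₃ s ≠ 0)
    (h42 : auxN k₀ χ₄ s * auxN k₀ χ₂ s + auxD k₀ χ₄ χ₂ s ≠ 0) :
    coefII g ((k₀, 0) + s ^ 2 • χ₁) ((k₀, 0) + s ^ 2 • χ₂)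
        (-((k₀, 0) + s ^ 2 • χ₃)) (-((k₀, 0) + s ^ 2 • χ₄))
      = s ^ 2 * auxG g k₀ χ₁ χ₂ χ₃ χ₄ s := by
  have h24 : χ₂ - χ₄ = -(χ₁ - χ₃) := by
    have h1 := congrArg Prod.fst hχ
    have h2 := congrArg Prod.snd hχ
    simp only [Prod.fst_add, Prod.snd_add] at h1 h2
    apply Prod.ext_iff.mpr
    constructor <;> simp only [Prod.fst_sub, Prod.snd_sub, Prod.fst_neg, Prod.snd_neg] <;> linarith
  -- vector components
  have hv : ∀ χ : ℝ × ℝ, ((k₀, (0:ℝ)) + s ^ 2 • χ) = (k₀ + s ^ 2 * χ.1, s ^ 2 * χ.2) := by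
    intro χ
    ext <;> simp
  have hsum13 : ((k₀, (0:ℝ)) + s ^ 2 • χ₁) + -((k₀, (0:ℝ)) + s ^ 2 • χ₃)
      = (s ^ 2 * (χ₁ - χ₃).1, s ^ 2 * (χ₁ - χ₃).2) := by
    ext <;> simp <;> ring
  have hsum24 : ((k₀, (0:ℝ)) + s ^ 2 • χ₂) + -((k₀, (0:ℝ)) + s ^ 2 • χ₄)
      = (s ^ 2 * (χ₂ - χ₄).1, s ^ 2 * (χ₂ - χ₄).2) := by
    ext <;> simp <;> ring
  -- norms
  have hn : ∀ χ : ℝ × ℝ, norm2 ((k₀, (0:ℝ)) + s ^ 2 • χ) = auxN k₀ χ s := by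
    intro χ; rw [hv]; rfl
  have hnn : ∀ χ : ℝ × ℝ, norm2 (-((k₀, (0:ℝ)) + s ^ 2 • χ)) = auxN k₀ χ s := by
    intro χ; rw [norm2_neg]; exact hn χ
  have hnpair : ∀ δ : ℝ × ℝ, norm2 (s ^ 2 * δ.1, s ^ 2 * δ.2) = s ^ 2 * norm2 δ := by
    intro δ
    simp only [norm2]
    rw [show (s ^ 2 * δ.1) ^ 2 + (s ^ 2 * δ.2) ^ 2 = (s ^ 2) ^ 2 * (δ.1 ^ 2 + δ.2 ^ 2) by ring,
      Real.sqrt_mul (by positivity), Real.sqrt_sq (by positivity)]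
  have hnS13 : norm2 (((k₀, (0:ℝ)) + s ^ 2 • χ₁) + -((k₀, (0:ℝ)) + s ^ 2 • χ₃))
      = s ^ 2 * norm2 (χ₁ - χ₃) := by rw [hsum13, hnpair]
  have hnS24 : norm2 (((k₀, (0:ℝ)) + s ^ 2 • χ₂) + -((k₀, (0:ℝ)) + s ^ 2 • χ₄))
      = s ^ 2 * norm2 (χ₁ - χ₃) := by rw [hsum24, hnpair, h24, norm2_neg]
  -- generic ell values on scaled differences
  have hellP : ∀ δ χ : ℝ × ℝ, ell (s ^ 2 * δ.1, s ^ 2 * δ.2) (k₀ + s ^ 2 * χ.1, s ^ 2 * χ.2)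
      = s * ((norm2 δ * auxN k₀ χ s + auxL k₀ δ χ s) /
          Real.sqrt (norm2 δ * auxN k₀ χ s)) := by
    intro δ χ
    have h2 : norm2 (k₀ + s ^ 2 * χ.1, s ^ 2 * χ.2) = auxN k₀ χ s := rfl
    have h3 : dot (s ^ 2 * δ.1, s ^ 2 * δ.2) (k₀ + s ^ 2 * χ.1, s ^ 2 * χ.2)
        = s ^ 2 * auxL k₀ δ χ s := by simp only [dot, auxL]; ring
    rw [ell, hnpair, h2, h3,
      show s ^ 2 * norm2 δ * auxN k₀ χ s = s ^ 2 * (norm2 δ * auxN k₀ χ s) by ring,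
      Real.sqrt_mul (sq_nonneg s), Real.sqrt_sq hs.le,
      show s ^ 2 * (norm2 δ * auxN k₀ χ s) + s ^ 2 * auxL k₀ δ χ s
        = s * (s * (norm2 δ * auxN k₀ χ s + auxL k₀ δ χ s)) by ring,
      mul_div_mul_left _ _ hs.ne', mul_div_assoc]
  have hellM : ∀ δ χ : ℝ × ℝ, ell (s ^ 2 * δ.1, s ^ 2 * δ.2) (-(k₀ + s ^ 2 * χ.1, s ^ 2 * χ.2))
      = s * ((norm2 δ * auxN k₀ χ s - auxL k₀ δ χ s) /
          Real.sqrt (norm2 δ * auxN k₀ χ s)) := by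
    intro δ χ
    have h2 : norm2 (-(k₀ + s ^ 2 * χ.1, s ^ 2 * χ.2)) = auxN k₀ χ s := norm2_neg _
    have h3 : dot (s ^ 2 * δ.1, s ^ 2 * δ.2) (-(k₀ + s ^ 2 * χ.1, s ^ 2 * χ.2))
        = -(s ^ 2 * auxL k₀ δ χ s) := by simp only [dot, auxL, Prod.fst_neg, Prod.snd_neg]; ring
    rw [ell, hnpair, h2, h3,
      show s ^ 2 * norm2 δ * auxN k₀ χ s = s ^ 2 * (norm2 δ * auxN k₀ χ s) by ring,
      Real.sqrt_mul (sq_nonneg s), Real.sqrt_sq hs.le,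
      show s ^ 2 * (norm2 δ * auxN k₀ χ s) + -(s ^ 2 * auxL k₀ δ χ s)
        = s * (s * (norm2 δ * auxN k₀ χ s - auxL k₀ δ χ s)) by ring,
      mul_div_mul_left _ _ hs.ne', mul_div_assoc]
  -- ell of nearly antipodal vectors
  have hell13 : ell ((k₀, (0:ℝ)) + s ^ 2 • χ₁) (-((k₀, (0:ℝ)) + s ^ 2 • χ₃))
      = s ^ 4 * (auxC k₀ χ₁ χ₃ s) ^ 2 /
          ((auxN k₀ χ₁ s * auxN k₀ χ₃ s + auxD k₀ χ₁ χ₃ s) *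
            Real.sqrt (auxN k₀ χ₁ s * auxN k₀ χ₃ s)) := by
    have hd : dot ((k₀, (0:ℝ)) + s ^ 2 • χ₁) (-((k₀, (0:ℝ)) + s ^ 2 • χ₃))
        = -auxD k₀ χ₁ χ₃ s := by
      rw [hv, hv]; simp only [dot, auxD, Prod.fst_neg, Prod.snd_neg]; ring
    have hid : auxN k₀ χ₁ s * auxN k₀ χ₃ s - auxD k₀ χ₁ χ₃ s
        = s ^ 4 * (auxC k₀ χ₁ χ₃ s) ^ 2 / (auxN k₀ χ₁ s * auxN k₀ χ₃ s + auxD k₀ χ₁ χ₃ s) := by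
      rw [eq_div_iff h13]
      have e1 : auxN k₀ χ₁ s ^ 2 = auxP k₀ χ₁ s := Real.sq_sqrt (by unfold auxP; positivity)
      have e3 : auxN k₀ χ₃ s ^ 2 = auxP k₀ χ₃ s := Real.sq_sqrt (by unfold auxP; positivity)
      simp only [auxP] at e1 e3
      simp only [auxD, auxC]
      linear_combination (auxN k₀ χ₃ s ^ 2) * e1 +
        (((k₀ + s ^ 2 * χ₁.1) ^ 2 + (s ^ 2 * χ₁.2) ^ 2)) * e3
    rw [ell, hn, hnn, hd, ← sub_eq_add_neg, hid, div_div]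
  have hell42 : ell (-((k₀, (0:ℝ)) + s ^ 2 • χ₄)) ((k₀, (0:ℝ)) + s ^ 2 • χ₂)
      = s ^ 4 * (auxC k₀ χ₄ χ₂ s) ^ 2 /
          ((auxN k₀ χ₄ s * auxN k₀ χ₂ s + auxD k₀ χ₄ χ₂ s) *
            Real.sqrt (auxN k₀ χ₄ s * auxN k₀ χ₂ s)) := by
    have hd : dot (-((k₀, (0:ℝ)) + s ^ 2 • χ₄)) ((k₀, (0:ℝ)) + s ^ 2 • χ₂)
        = -auxD k₀ χ₄ χ₂ s := by
      rw [hv, hv]; simp only [dot, auxD, Prod.fst_neg, Prod.snd_neg]; ring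
    have hid : auxN k₀ χ₄ s * auxN k₀ χ₂ s - auxD k₀ χ₄ χ₂ s
        = s ^ 4 * (auxC k₀ χ₄ χ₂ s) ^ 2 / (auxN k₀ χ₄ s * auxN k₀ χ₂ s + auxD k₀ χ₄ χ₂ s) := by
      rw [eq_div_iff h42]
      have e1 : auxN k₀ χ₄ s ^ 2 = auxP k₀ χ₄ s := Real.sq_sqrt (by unfold auxP; positivity)
      have e3 : auxN k₀ χ₂ s ^ 2 = auxP k₀ χ₂ s := Real.sq_sqrt (by unfold auxP; positivity)
      simp only [auxP] at e1 e3
      simp only [auxD, auxC]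
      linear_combination (auxN k₀ χ₂ s ^ 2) * e1 +
        (((k₀ + s ^ 2 * χ₄.1) ^ 2 + (s ^ 2 * χ₄.2) ^ 2)) * e3
    rw [ell, hnn, hn, hd, ← sub_eq_add_neg, hid, div_div]
  -- frequencies
  have homgS13 : omg g (((k₀, (0:ℝ)) + s ^ 2 • χ₁) + -((k₀, (0:ℝ)) + s ^ 2 • χ₃))
      = s * Real.sqrt (g * norm2 (χ₁ - χ₃)) := by
    rw [omg, hnS13, show g * (s ^ 2 * norm2 (χ₁ - χ₃)) = s ^ 2 * (g * norm2 (χ₁ - χ₃)) by ring,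
      Real.sqrt_mul (sq_nonneg s), Real.sqrt_sq hs.le]
  have homgS24 : omg g (((k₀, (0:ℝ)) + s ^ 2 • χ₂) + -((k₀, (0:ℝ)) + s ^ 2 • χ₄))
      = s * Real.sqrt (g * norm2 (χ₁ - χ₃)) := by
    rw [omg, hnS24, show g * (s ^ 2 * norm2 (χ₁ - χ₃)) = s ^ 2 * (g * norm2 (χ₁ - χ₃)) by ring,
      Real.sqrt_mul (sq_nonneg s), Real.sqrt_sq hs.le]
  have hqq : ∀ χ χ' : ℝ × ℝ, Real.sqrt (g * auxN k₀ χ s) - Real.sqrt (g * auxN k₀ χ' s)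
      = s ^ 2 * auxQ g k₀ χ χ' s := by
    intro χ χ'
    rcases eq_or_ne (Real.sqrt (g * auxN k₀ χ s) + Real.sqrt (g * auxN k₀ χ' s)) 0 with h | h
    · have h1 : Real.sqrt (g * auxN k₀ χ s) = 0 ∧ Real.sqrt (g * auxN k₀ χ' s) = 0 := by
        constructor <;>
          nlinarith [Real.sqrt_nonneg (g * auxN k₀ χ s), Real.sqrt_nonneg (g * auxN k₀ χ' s)]
      rw [auxQ, h, mul_zero, div_zero, mul_zero, h1.1, h1.2, sub_zero]
    · have hn13 : auxN k₀ χ s + auxN k₀ χ' s ≠ 0 := by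
        intro h0
        have hz : auxN k₀ χ s = 0 ∧ auxN k₀ χ' s = 0 := by
          constructor <;>
            nlinarith [Real.sqrt_nonneg (auxP k₀ χ s), Real.sqrt_nonneg (auxP k₀ χ' s),
              show auxN k₀ χ s = Real.sqrt (auxP k₀ χ s) from rfl,
              show auxN k₀ χ' s = Real.sqrt (auxP k₀ χ' s) from rfl]
        apply h
        rw [hz.1, hz.2, mul_zero, Real.sqrt_zero, add_zero]
      rw [auxQ, mul_div_assoc']
      rw [eq_div_iff (mul_ne_zero hn13 h)]
      have e1 : auxN k₀ χ s ^ 2 = auxP k₀ χ s := Real.sq_sqrt (by unfold auxP; positivity)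
      have e3 : auxN k₀ χ' s ^ 2 = auxP k₀ χ' s := Real.sq_sqrt (by unfold auxP; positivity)
      have w1 : Real.sqrt (g * auxN k₀ χ s) ^ 2 = g * auxN k₀ χ s :=
        Real.sq_sqrt (mul_nonneg hg (Real.sqrt_nonneg _))
      have w3 : Real.sqrt (g * auxN k₀ χ' s) ^ 2 = g * auxN k₀ χ' s :=
        Real.sq_sqrt (mul_nonneg hg (Real.sqrt_nonneg _))
      simp only [auxP] at e1 e3
      linear_combination (auxN k₀ χ s + auxN k₀ χ' s) * w1 -
        (auxN k₀ χ s + auxN k₀ χ' s) * w3 + g * e1 - g * e3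
  have hD1 : omg g ((k₀, (0:ℝ)) + s ^ 2 • χ₁) +
        omg g (((k₀, (0:ℝ)) + s ^ 2 • χ₁) + -((k₀, (0:ℝ)) + s ^ 2 • χ₃)) -
        omg g (-((k₀, (0:ℝ)) + s ^ 2 • χ₃))
      = s * (Real.sqrt (g * norm2 (χ₁ - χ₃)) + s * auxQ g k₀ χ₁ χ₃ s) := by
    rw [homgS13, omg, omg, hn, hnn]
    have := hqq χ₁ χ₃
    linarith [hqq χ₁ χ₃]
  have hD2 : omg g (-((k₀, (0:ℝ)) + s ^ 2 • χ₄)) +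
        omg g (((k₀, (0:ℝ)) + s ^ 2 • χ₂) + -((k₀, (0:ℝ)) + s ^ 2 • χ₄)) -
        omg g ((k₀, (0:ℝ)) + s ^ 2 • χ₂)
      = s * (Real.sqrt (g * norm2 (χ₁ - χ₃)) + s * auxQ g k₀ χ₄ χ₂ s) := by
    rw [homgS24, omg, omg, hn, hnn]
    linarith [hqq χ₄ χ₂]
  have hnd24 : norm2 (χ₂ - χ₄) = norm2 (χ₁ - χ₃) := by rw [h24, norm2_neg]
  have hL24 : ∀ χ : ℝ × ℝ, auxL k₀ (χ₂ - χ₄) χ s = -auxL k₀ (χ₁ - χ₃) χ s := by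
    intro χ
    rw [h24]
    simp only [auxL, Prod.fst_neg, Prod.snd_neg, Prod.fst_sub, Prod.snd_sub]
    ring
  have hA : (auxN k₀ χ₁ s * auxN k₀ χ₂ s * auxN k₀ χ₃ s * auxN k₀ χ₄ s *
        (s ^ 2 * norm2 (χ₁ - χ₃)) * (s ^ 2 * norm2 (χ₁ - χ₃))) ^ ((1 : ℝ) / 4)
      = s * (auxN k₀ χ₁ s * auxN k₀ χ₂ s * auxN k₀ χ₃ s * auxN k₀ χ₄ s *
          norm2 (χ₁ - χ₃) ^ 2) ^ ((1 : ℝ) / 4) := by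
    rw [show auxN k₀ χ₁ s * auxN k₀ χ₂ s * auxN k₀ χ₃ s * auxN k₀ χ₄ s *
          (s ^ 2 * norm2 (χ₁ - χ₃)) * (s ^ 2 * norm2 (χ₁ - χ₃))
        = s ^ 4 * (auxN k₀ χ₁ s * auxN k₀ χ₂ s * auxN k₀ χ₃ s * auxN k₀ χ₄ s *
            norm2 (χ₁ - χ₃) ^ 2) by ring]
    have hnn4 : (0:ℝ) ≤ auxN k₀ χ₁ s * auxN k₀ χ₂ s * auxN k₀ χ₃ s * auxN k₀ χ₄ s *
        norm2 (χ₁ - χ₃) ^ 2 := by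
      exact mul_nonneg (mul_nonneg (mul_nonneg (mul_nonneg (Real.sqrt_nonneg _)
        (Real.sqrt_nonneg _)) (Real.sqrt_nonneg _)) (Real.sqrt_nonneg _)) (sq_nonneg _)
    rw [Real.mul_rpow (by positivity) hnn4]
    congr 1
    rw [← Real.rpow_natCast s 4, ← Real.rpow_mul hs.le]
    norm_num
  unfold coefII
  simp only [neg_neg]
  rw [hn χ₁, hn χ₂, hnn χ₃, hnn χ₄, hnS13, hnS24, hell13, hell42, hD1, hD2,
    hsum13, hsum24, hv χ₁, hv χ₂, hv χ₃, hv χ₄,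
    hellP (χ₁ - χ₃) χ₃, hellM (χ₁ - χ₃) χ₁, hellM (χ₂ - χ₄) χ₂, hellP (χ₂ - χ₄) χ₄,
    hnd24, hL24 χ₂, hL24 χ₄, hA]
  have hinv : ∀ U : ℝ, 1 / (s * U) = s⁻¹ * (1 / U) := by
    intro U; rw [one_div, mul_inv, one_div]
  rw [hinv, hinv]
  unfold auxG auxB
  linear_combination (Real.sqrt g / (32 * Real.pi ^ 2) *
      ((auxN k₀ χ₁ s * auxN k₀ χ₂ s * auxN k₀ χ₃ s * auxN k₀ χ₄ s *
          norm2 (χ₁ - χ₃) ^ 2) ^ ((1 : ℝ) / 4)) *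
      ((norm2 (χ₁ - χ₃) * auxN k₀ χ₃ s + auxL k₀ (χ₁ - χ₃) χ₃ s) /
          Real.sqrt (norm2 (χ₁ - χ₃) * auxN k₀ χ₃ s)
        - (norm2 (χ₁ - χ₃) * auxN k₀ χ₁ s - auxL k₀ (χ₁ - χ₃) χ₁ s) /
          Real.sqrt (norm2 (χ₁ - χ₃) * auxN k₀ χ₁ s)
        + s ^ 3 * (auxC k₀ χ₁ χ₃ s) ^ 2 /
            ((auxN k₀ χ₁ s * auxN k₀ χ₃ s + auxD k₀ χ₁ χ₃ s) *
              Real.sqrt (auxN k₀ χ₁ s * auxN k₀ χ₃ s))) *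
      ((norm2 (χ₁ - χ₃) * auxN k₀ χ₂ s + auxL k₀ (χ₁ - χ₃) χ₂ s) /
          Real.sqrt (norm2 (χ₁ - χ₃) * auxN k₀ χ₂ s)
        - (norm2 (χ₁ - χ₃) * auxN k₀ χ₄ s - auxL k₀ (χ₁ - χ₃) χ₄ s) /
          Real.sqrt (norm2 (χ₁ - χ₃) * auxN k₀ χ₄ s)
        + s ^ 3 * (auxC k₀ χ₄ χ₂ s) ^ 2 /
            ((auxN k₀ χ₄ s * auxN k₀ χ₂ s + auxD k₀ χ₄ χ₂ s) *
              Real.sqrt (auxN k₀ χ₄ s * auxN k₀ χ₂ s))) *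
      ((Real.sqrt (g * norm2 (χ₁ - χ₃)) + s * auxQ g k₀ χ₁ χ₃ s)⁻¹
        + (Real.sqrt (g * norm2 (χ₁ - χ₃)) + s * auxQ g k₀ χ₄ χ₂ s)⁻¹) * s ^ 2) *
    (mul_inv_cancel₀ hs.ne' : s * s⁻¹ = 1)

/-- Modulational expansion of the coefficient II. -/
theorem coefII_modulational_expansion (g k₀ : ℝ) (hg : 0 < g) (hk₀ : 0 < k₀)
    (χ₁ χ₂ χ₃ χ₄ : ℝ × ℝ) (hχ : χ₁ + χ₂ = χ₃ + χ₄) (hne : χ₁ ≠ χ₃) :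
    (fun ε : ℝ =>
        coefII g ((k₀, 0) + ε • χ₁) ((k₀, 0) + ε • χ₂)
            (-((k₀, 0) + ε • χ₃)) (-((k₀, 0) + ε • χ₄))
          - ε * (k₀ ^ 2 / (4 * Real.pi ^ 2)) * (χ₁.1 - χ₃.1) ^ 2 / norm2 (χ₁ - χ₃))
      =O[𝓝[>] (0 : ℝ)] fun ε => ε ^ ((3 : ℝ) / 2) := by
  have hG0 := auxG_zero g k₀ hg hk₀ χ₁ χ₂ χ₃ χ₄ hne
  have hO : (fun s => auxG g k₀ χ₁ χ₂ χ₃ χ₄ s - auxG g k₀ χ₁ χ₂ χ₃ χ₄ 0)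
      =O[𝓝 (0:ℝ)] (fun s => s) := by
    simpa using (auxG_differentiable g k₀ hg hk₀ χ₁ χ₂ χ₃ χ₄ hne).isBigO_sub
  have hsq : Tendsto Real.sqrt (𝓝[>] (0:ℝ)) (𝓝 0) := by
    have h := Real.continuous_sqrt.tendsto 0
    rw [Real.sqrt_zero] at h
    exact h.mono_left nhdsWithin_le_nhds
  have h1 : (fun ε => auxG g k₀ χ₁ χ₂ χ₃ χ₄ (Real.sqrt ε) - auxG g k₀ χ₁ χ₂ χ₃ χ₄ 0)
      =O[𝓝[>] (0:ℝ)] fun ε => Real.sqrt ε := hO.comp_tendsto hsq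
  have h2 : (fun ε => ε * (auxG g k₀ χ₁ χ₂ χ₃ χ₄ (Real.sqrt ε) - auxG g k₀ χ₁ χ₂ χ₃ χ₄ 0))
      =O[𝓝[>] (0:ℝ)] fun ε => ε * Real.sqrt ε :=
    (isBigO_refl (fun ε : ℝ => ε) _).mul h1
  -- eventual nonvanishing of the two denominators
  have hcN : ∀ χ : ℝ × ℝ, Continuous (auxN k₀ χ) := by
    intro χ
    apply Real.continuous_sqrt.comp
    unfold auxP
    continuity
  have hcond : ∀ χ χ' : ℝ × ℝ, ∀ᶠ s in 𝓝 (0:ℝ),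
      auxN k₀ χ s * auxN k₀ χ' s + auxD k₀ χ χ' s ≠ 0 := by
    intro χ χ'
    apply ContinuousAt.eventually_ne
    · exact (((hcN χ).mul (hcN χ')).add (by unfold auxD; continuity)).continuousAt
    · simp only [auxN_zero k₀ hk₀.le, auxD]
      norm_num
      nlinarith
  refine h2.congr' ?_ ?_
  · filter_upwards [hsq.eventually (hcond χ₁ χ₃), hsq.eventually (hcond χ₄ χ₂),
      self_mem_nhdsWithin] with ε e1 e2 hε
    have hε' : (0:ℝ) < ε := hε
    have hkey := coefII_eq_auxG g k₀ hg.le χ₁ χ₂ χ₃ χ₄ hχ (Real.sqrt ε)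
      (Real.sqrt_pos.mpr hε') e1 e2
    rw [Real.sq_sqrt hε'.le] at hkey
    rw [hkey, hG0]
    ring
  · filter_upwards [self_mem_nhdsWithin] with ε hε
    have hε' : (0:ℝ) < ε := hε
    rw [show ((3:ℝ)/2) = 1 + 1/2 by norm_num, Real.rpow_add hε', Real.rpow_one,
      ← Real.sqrt_eq_rpow]
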